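/- arXiv:1101.2970 — 4 statements merged into one kernel-verified Lean document; each statement's English description precedes it below -/
import Mathlib

section
/- Let n ≥ 3 be an integer and let l_1, …, l_n ∈ ℕ ∪ {∞} satisfy l_i ≥ 3 for every i. If the curvature κ = 1 − n/2 + Σ_{i=1}^n 1/l_i (computed in ℝ with 1/∞ = 0) is strictly negative, then κ ≤ −1/1806. -/
/-- The reciprocal of an extended natural number, as a real number,
with the convention `1/∞ = 0`. -/
noncomputable def einv : ℕ∞ → ℝ
  | ⊤ => 0
  | (m : ℕ) => (m : ℝ)⁻¹

/-- The set of possible values of `einv`. -/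
def inS (x : ℝ) : Prop := x = 0 ∨ ∃ m : ℕ, 3 ≤ m ∧ x = (m : ℝ)⁻¹

lemma einv_inS {l : ℕ∞} (h : 3 ≤ l) : inS (einv l) := by
  cases l with
  | top => left; rfl
  | coe m => right; exact ⟨m, by exact_mod_cast h, rfl⟩

lemma inS_nonneg {x : ℝ} (hx : inS x) : 0 ≤ x := by
  rcases hx with rfl | ⟨m, _, rfl⟩
  · exact le_refl 0
  · positivity

lemma inS_le_third {x : ℝ} (hx : inS x) : x * 3 ≤ 1 := by
  rcases hx with rfl | ⟨m, hm, rfl⟩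
  · norm_num
  · have hm' : (3:ℝ) ≤ m := by exact_mod_cast hm
    have h0 : (0:ℝ) < m := by linarith
    rw [inv_mul_le_iff₀ h0]
    linarith

lemma inS_gap {x : ℝ} (hx : inS x) (k k' : ℝ) (hk : ∃ m : ℕ, (m:ℝ) = k)
    (hk' : k' = k + 1) (h : x * k < 1) : x * k' ≤ 1 := by
  obtain ⟨m, rfl⟩ := hk
  rcases hx with rfl | ⟨m', hm', rfl⟩
  · subst hk'; simp
  · have h3 : (3:ℝ) ≤ m' := by exact_mod_cast hm'
    have h0 : (0:ℝ) < m' := by linarith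
    have hlt : (m:ℝ) < m' := by
      by_contra hcon
      push_neg at hcon
      have : (1:ℝ) ≤ (m':ℝ)⁻¹ * m := by
        rw [inv_mul_eq_div, le_div_iff₀ h0]; linarith
      linarith
    have hnat : m < m' := by exact_mod_cast hlt
    have hsucc : (m:ℝ) + 1 ≤ m' := by exact_mod_cast hnat
    subst hk'
    rw [inv_mul_le_iff₀ h0]
    linarith

lemma inS_step {x : ℝ} (hx : inS x) (k k' : ℝ) (hk : ∃ m : ℕ, (m:ℝ) = k)
    (hk' : k' = k + 1) (h : x * k ≤ 1) : x * k = 1 ∨ x * k' ≤ 1 := by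
  rcases h.lt_or_eq with h | h
  · exact Or.inr (inS_gap hx k k' hk hk' h)
  · exact Or.inl h

lemma sort3 (P : ℝ → Prop) {x y z : ℝ} (hx : P x) (hy : P y) (hz : P z) :
    ∃ a b c, P a ∧ P b ∧ P c ∧ b ≤ a ∧ c ≤ b ∧ a + b + c = x + y + z := by
  rcases le_total x y with h1 | h1 <;> rcases le_total y z with h2 | h2 <;>
    rcases le_total x z with h3 | h3 <;>
  first
    | exact ⟨x, y, z, hx, hy, hz, by linarith, by linarith, by linarith⟩
    | exact ⟨x, z, y, hx, hz, hy, by linarith, by linarith, by linarith⟩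
    | exact ⟨y, x, z, hy, hx, hz, by linarith, by linarith, by linarith⟩
    | exact ⟨y, z, x, hy, hz, hx, by linarith, by linarith, by linarith⟩
    | exact ⟨z, x, y, hz, hx, hy, by linarith, by linarith, by linarith⟩
    | exact ⟨z, y, x, hz, hy, hx, by linarith, by linarith, by linarith⟩

lemma sort4 (P : ℝ → Prop) {x y z w : ℝ} (hx : P x) (hy : P y) (hz : P z) (hw : P w) :
    ∃ a b c d, P a ∧ P b ∧ P c ∧ P d ∧ b ≤ a ∧ c ≤ b ∧ d ≤ c ∧
      a + b + c + d = x + y + z + w := by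
  obtain ⟨a, b, c, ha, hb, hc, hab, hbc, hs⟩ := sort3 P hy hz hw
  rcases le_total x c with h | h
  · exact ⟨a, b, c, x, ha, hb, hc, hx, hab, hbc, h, by linarith⟩
  rcases le_total x b with h' | h'
  · exact ⟨a, b, x, c, ha, hb, hx, hc, hab, h', h, by linarith⟩
  rcases le_total x a with h'' | h''
  · exact ⟨a, x, b, c, ha, hx, hb, hc, h'', h', hbc, by linarith⟩
  · exact ⟨x, a, b, c, hx, ha, hb, hc, h'', hab, hbc, by linarith⟩

lemma sort5 (P : ℝ → Prop) {x y z w v : ℝ} (hx : P x) (hy : P y) (hz : P z) (hw : P w)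
    (hv : P v) :
    ∃ a b c d e, P a ∧ P b ∧ P c ∧ P d ∧ P e ∧ b ≤ a ∧ c ≤ b ∧ d ≤ c ∧ e ≤ d ∧
      a + b + c + d + e = x + y + z + w + v := by
  obtain ⟨a, b, c, d, ha, hb, hc, hd, hab, hbc, hcd, hs⟩ := sort4 P hy hz hw hv
  rcases le_total x d with h | h
  · exact ⟨a, b, c, d, x, ha, hb, hc, hd, hx, hab, hbc, hcd, h, by linarith⟩
  rcases le_total x c with h' | h'
  · exact ⟨a, b, c, x, d, ha, hb, hc, hx, hd, hab, hbc, h', h, by linarith⟩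
  rcases le_total x b with h'' | h''
  · exact ⟨a, b, x, c, d, ha, hb, hx, hc, hd, hab, h'', h', hcd, by linarith⟩
  rcases le_total x a with h3 | h3
  · exact ⟨a, x, b, c, d, ha, hx, hb, hc, hd, h3, h'', hbc, hcd, by linarith⟩
  · exact ⟨x, a, b, c, d, hx, ha, hb, hc, hd, h3, hab, hbc, hcd, by linarith⟩

lemma sort6 (P : ℝ → Prop) {x y z w v u : ℝ} (hx : P x) (hy : P y) (hz : P z) (hw : P w)
    (hv : P v) (hu : P u) :
    ∃ a b c d e f, P a ∧ P b ∧ P c ∧ P d ∧ P e ∧ P f ∧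
      b ≤ a ∧ c ≤ b ∧ d ≤ c ∧ e ≤ d ∧ f ≤ e ∧
      a + b + c + d + e + f = x + y + z + w + v + u := by
  obtain ⟨a, b, c, d, e, ha, hb, hc, hd, he, hab, hbc, hcd, hde, hs⟩ := sort5 P hy hz hw hv hu
  rcases le_total x e with h | h
  · exact ⟨a, b, c, d, e, x, ha, hb, hc, hd, he, hx, hab, hbc, hcd, hde, h, by linarith⟩
  rcases le_total x d with h' | h'
  · exact ⟨a, b, c, d, x, e, ha, hb, hc, hd, hx, he, hab, hbc, hcd, h', h, by linarith⟩
  rcases le_total x c with h'' | h''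
  · exact ⟨a, b, c, x, d, e, ha, hb, hc, hx, hd, he, hab, hbc, h'', h', hde, by linarith⟩
  rcases le_total x b with h3 | h3
  · exact ⟨a, b, x, c, d, e, ha, hb, hx, hc, hd, he, hab, h3, h'', hcd, hde, by linarith⟩
  rcases le_total x a with h4 | h4
  · exact ⟨a, x, b, c, d, e, ha, hx, hb, hc, hd, he, h4, h3, hbc, hcd, hde, by linarith⟩
  · exact ⟨x, a, b, c, d, e, hx, ha, hb, hc, hd, he, h4, hab, hbc, hcd, hde, by linarith⟩

lemma key3 {a b c : ℝ} (ha : inS a) (hb : inS b) (hc : inS c)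
    (hba : b ≤ a) (hcb : c ≤ b) (h : a + b + c < 1/2) :
    a + b + c ≤ 451/903 := by
  have hc0 := inS_nonneg hc
  have ha3 := inS_le_third ha
  rcases inS_step ha 3 4 ⟨3, by norm_num⟩ (by norm_num) ha3 with e3 | h4
  · -- a = 1/3
    have hb7 : b * 7 ≤ 1 := inS_gap hb 6 7 ⟨6, by norm_num⟩ (by norm_num) (by linarith)
    rcases inS_step hb 7 8 ⟨7, by norm_num⟩ (by norm_num) hb7 with e | hb8
    · have : c * 43 ≤ 1 := inS_gap hc 42 43 ⟨42, by norm_num⟩ (by norm_num) (by linarith)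
      linarith
    rcases inS_step hb 8 9 ⟨8, by norm_num⟩ (by norm_num) hb8 with e | hb9
    · have : c * 25 ≤ 1 := inS_gap hc 24 25 ⟨24, by norm_num⟩ (by norm_num) (by linarith)
      linarith
    rcases inS_step hb 9 10 ⟨9, by norm_num⟩ (by norm_num) hb9 with e | hb10
    · have : c * 19 ≤ 1 := inS_gap hc 18 19 ⟨18, by norm_num⟩ (by norm_num) (by linarith)
      linarith
    rcases inS_step hb 10 11 ⟨10, by norm_num⟩ (by norm_num) hb10 with e | hb11
    · have : c * 16 ≤ 1 := inS_gap hc 15 16 ⟨15, by norm_num⟩ (by norm_num) (by linarith)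
      linarith
    rcases inS_step hb 11 12 ⟨11, by norm_num⟩ (by norm_num) hb11 with e | hb12
    · have : c * 14 ≤ 1 := inS_gap hc 13 14 ⟨13, by norm_num⟩ (by norm_num) (by linarith)
      linarith
    rcases inS_step hb 12 13 ⟨12, by norm_num⟩ (by norm_num) hb12 with e | hb13
    · have : c * 13 ≤ 1 := inS_gap hc 12 13 ⟨12, by norm_num⟩ (by norm_num) (by linarith)
      linarith
    · linarith
  rcases inS_step ha 4 5 ⟨4, by norm_num⟩ (by norm_num) h4 with e4 | h5
  · -- a = 1/4
    rcases inS_step hb 4 5 ⟨4, by norm_num⟩ (by norm_num) (by linarith) with e | hb5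
    · linarith
    rcases inS_step hb 5 6 ⟨5, by norm_num⟩ (by norm_num) hb5 with e | hb6
    · have : c * 21 ≤ 1 := inS_gap hc 20 21 ⟨20, by norm_num⟩ (by norm_num) (by linarith)
      linarith
    rcases inS_step hb 6 7 ⟨6, by norm_num⟩ (by norm_num) hb6 with e | hb7
    · have : c * 13 ≤ 1 := inS_gap hc 12 13 ⟨12, by norm_num⟩ (by norm_num) (by linarith)
      linarith
    rcases inS_step hb 7 8 ⟨7, by norm_num⟩ (by norm_num) hb7 with e | hb8
    · have : c * 10 ≤ 1 := inS_gap hc 9 10 ⟨9, by norm_num⟩ (by norm_num) (by linarith)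
      linarith
    rcases inS_step hb 8 9 ⟨8, by norm_num⟩ (by norm_num) hb8 with e | hb9
    · have : c * 9 ≤ 1 := inS_gap hc 8 9 ⟨8, by norm_num⟩ (by norm_num) (by linarith)
      linarith
    · linarith
  rcases inS_step ha 5 6 ⟨5, by norm_num⟩ (by norm_num) h5 with e5 | h6
  · -- a = 1/5
    rcases inS_step hb 5 6 ⟨5, by norm_num⟩ (by norm_num) (by linarith) with e | hb6
    · have : c * 11 ≤ 1 := inS_gap hc 10 11 ⟨10, by norm_num⟩ (by norm_num) (by linarith)
      linarith
    rcases inS_step hb 6 7 ⟨6, by norm_num⟩ (by norm_num) hb6 with e | hb7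
    · have : c * 8 ≤ 1 := inS_gap hc 7 8 ⟨7, by norm_num⟩ (by norm_num) (by linarith)
      linarith
    · linarith
  rcases inS_step ha 6 7 ⟨6, by norm_num⟩ (by norm_num) h6 with e6 | h7
  · -- a = 1/6
    rcases inS_step hb 6 7 ⟨6, by norm_num⟩ (by norm_num) (by linarith) with e | hb7
    · have : c * 7 ≤ 1 := inS_gap hc 6 7 ⟨6, by norm_num⟩ (by norm_num) (by linarith)
      linarith
    · linarith
  · linarith

lemma key4 {a b c d : ℝ} (ha : inS a) (hb : inS b) (hc : inS c) (hd : inS d)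
    (hba : b ≤ a) (hcb : c ≤ b) (hdc : d ≤ c) (h : a + b + c + d < 1) :
    a + b + c + d ≤ 155/156 := by
  have hd0 := inS_nonneg hd
  have ha3 := inS_le_third ha
  have hb3 := inS_le_third hb
  have hc3 := inS_le_third hc
  rcases inS_step ha 3 4 ⟨3, by norm_num⟩ (by norm_num) ha3 with e3 | h4
  · rcases inS_step hb 3 4 ⟨3, by norm_num⟩ (by norm_num) hb3 with f3 | hb4
    · rcases inS_step hc 3 4 ⟨3, by norm_num⟩ (by norm_num) hc3 with g3 | hc4
      · linarith
      rcases inS_step hc 4 5 ⟨4, by norm_num⟩ (by norm_num) hc4 with g | hc5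
      · have : d * 13 ≤ 1 := inS_gap hd 12 13 ⟨12, by norm_num⟩ (by norm_num) (by linarith)
        linarith
      rcases inS_step hc 5 6 ⟨5, by norm_num⟩ (by norm_num) hc5 with g | hc6
      · have : d * 8 ≤ 1 := inS_gap hd 7 8 ⟨7, by norm_num⟩ (by norm_num) (by linarith)
        linarith
      rcases inS_step hc 6 7 ⟨6, by norm_num⟩ (by norm_num) hc6 with g | hc7
      · have : d * 7 ≤ 1 := inS_gap hd 6 7 ⟨6, by norm_num⟩ (by norm_num) (by linarith)
        linarith
      · linarith
    rcases inS_step hb 4 5 ⟨4, by norm_num⟩ (by norm_num) hb4 with f | hb5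
    · rcases inS_step hc 4 5 ⟨4, by norm_num⟩ (by norm_num) (by linarith) with g | hc5
      · have : d * 7 ≤ 1 := inS_gap hd 6 7 ⟨6, by norm_num⟩ (by norm_num) (by linarith)
        linarith
      · linarith
    · linarith
  · rcases inS_step hd 4 5 ⟨4, by norm_num⟩ (by norm_num) (by linarith) with g | hd5
    · linarith
    · linarith

lemma key5 {a b c d e : ℝ} (ha : inS a) (hb : inS b) (hc : inS c) (hd : inS d)
    (he : inS e) (hba : b ≤ a) (hcb : c ≤ b) (hdc : d ≤ c) (hed : e ≤ d)
    (h : a + b + c + d + e < 3/2) :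
    a + b + c + d + e ≤ 31/21 := by
  have he0 := inS_nonneg he
  have ha3 := inS_le_third ha
  have hb3 := inS_le_third hb
  have hc3 := inS_le_third hc
  have hd3 := inS_le_third hd
  rcases inS_step hd 3 4 ⟨3, by norm_num⟩ (by norm_num) hd3 with g | hd4
  · have : e * 7 ≤ 1 := inS_gap he 6 7 ⟨6, by norm_num⟩ (by norm_num) (by linarith)
    linarith
  · rcases inS_step he 4 5 ⟨4, by norm_num⟩ (by norm_num) (by linarith) with g | he5
    · rcases inS_step hc 3 4 ⟨3, by norm_num⟩ (by norm_num) hc3 with g2 | hc4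
      · linarith
      · linarith
    · linarith

lemma key6 {a b c d e f : ℝ} (ha : inS a) (hb : inS b) (hc : inS c) (hd : inS d)
    (he : inS e) (hf : inS f) (hba : b ≤ a) (hcb : c ≤ b) (hdc : d ≤ c) (hed : e ≤ d)
    (hfe : f ≤ e) (h : a + b + c + d + e + f < 2) :
    a + b + c + d + e + f ≤ 23/12 := by
  have ha3 := inS_le_third ha
  have hb3 := inS_le_third hb
  have hc3 := inS_le_third hc
  have hd3 := inS_le_third hd
  have he3 := inS_le_third he
  rcases inS_step hf 3 4 ⟨3, by norm_num⟩ (by norm_num) (inS_le_third hf) with g | hf4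
  · linarith
  · linarith

/-- If `n ≥ 3` and `l₁, …, lₙ ∈ ℕ ∪ {∞}` all satisfy `lᵢ ≥ 3` and the curvature
`κ = 1 − n/2 + Σᵢ 1/lᵢ` (with `1/∞ = 0`) is strictly negative,
then `κ ≤ −1/1806`. -/
theorem stmt_0 (n : ℕ) (hn : 3 ≤ n) (l : Fin n → ℕ∞) (hl : ∀ i, 3 ≤ l i)
    (hneg : 1 - (n : ℝ) / 2 + ∑ i, einv (l i) < 0) :
    1 - (n : ℝ) / 2 + ∑ i, einv (l i) ≤ -1 / 1806 := by
  have hS : ∀ i, inS (einv (l i)) := fun i => einv_inS (hl i)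
  rcases le_or_gt 7 n with h7 | h7
  · have hsum : ∑ i, einv (l i) ≤ (n:ℝ) * (1/3) := by
      calc ∑ i, einv (l i) ≤ ∑ _i : Fin n, (1/3 : ℝ) :=
            Finset.sum_le_sum (fun i _ => by have := inS_le_third (hS i); linarith)
        _ = (n:ℝ) * (1/3) := by
            rw [Finset.sum_const, Finset.card_univ, Fintype.card_fin, nsmul_eq_mul]
    have h7' : (7:ℝ) ≤ (n:ℝ) := by exact_mod_cast h7
    linarith
  · interval_cases n
    · obtain ⟨a, b, c, ha, hb, hc, hba, hcb, hs⟩ :=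
        sort3 inS (hS 0) (hS 1) (hS 2)
      rw [Fin.sum_univ_three] at hneg ⊢
      push_cast at hneg ⊢
      have key := key3 ha hb hc hba hcb (by linarith)
      linarith
    · obtain ⟨a, b, c, d, ha, hb, hc, hd, hba, hcb, hdc, hs⟩ :=
        sort4 inS (hS 0) (hS 1) (hS 2) (hS 3)
      rw [Fin.sum_univ_four] at hneg ⊢
      push_cast at hneg ⊢
      have key := key4 ha hb hc hd hba hcb hdc (by linarith)
      linarith
    · obtain ⟨a, b, c, d, e, ha, hb, hc, hd, he, hba, hcb, hdc, hed, hs⟩ :=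
        sort5 inS (hS 0) (hS 1) (hS 2) (hS 3) (hS 4)
      rw [Fin.sum_univ_five] at hneg ⊢
      push_cast at hneg ⊢
      have key := key5 ha hb hc hd he hba hcb hdc hed (by linarith)
      linarith
    · obtain ⟨a, b, c, d, e, f, ha, hb, hc, hd, he, hf, hba, hcb, hdc, hed, hfe, hs⟩ :=
        sort6 inS (hS 0) (hS 1) (hS 2) (hS 3) (hS 4) (hS 5)
      rw [Fin.sum_univ_six] at hneg ⊢
      push_cast at hneg ⊢
      have key := key6 ha hb hc hd he hf hba hcb hdc hed hfe (by linarith)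
      linarith
end

section
/- Let n ≥ 3 be an integer and let l_1, …, l_n ∈ ℕ ∪ {∞} satisfy l_i ≥ 3 for every i, and suppose the curvature κ = 1 − n/2 + Σ_{i=1}^n 1/l_i (with 1/∞ = 0) is strictly negative. Then κ = −1/1806 if and only if n = 3 and the multiset {l_1, l_2, l_3} equals {3, 7, 43}. -/
lemma einv_top : einv ⊤ = 0 := rfl
lemma einv_coe (m : ℕ) : einv (m : ℕ∞) = (m : ℝ)⁻¹ := rfl

lemma einv_nonneg (x : ℕ∞) : 0 ≤ einv x := by
  cases x with
  | top => simp [einv_top]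
  | coe m => rw [einv_coe]; positivity

lemma einv_le_third {x : ℕ∞} (hx : 3 ≤ x) : einv x ≤ 3⁻¹ := by
  cases x with
  | top => rw [einv_top]; norm_num
  | coe m =>
    rw [einv_coe]
    have hm : 3 ≤ m := by exact_mod_cast hx
    have : (3:ℝ) ≤ m := by exact_mod_cast hm
    rw [inv_le_inv₀ (by linarith) (by norm_num)]
    exact this

lemma exists_avg (s : Multiset ℝ) (hs : s ≠ 0) : ∃ x ∈ s, s.sum ≤ s.card * x := by
  induction s using Multiset.induction with
  | empty => simp at hs
  | cons a t ih =>
    rcases eq_or_ne t 0 with rfl | ht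
    · exact ⟨a, by simp, by simp⟩
    · obtain ⟨x, hxt, hx⟩ := ih ht
      rcases le_total a x with h | h
      · refine ⟨x, Multiset.mem_cons_of_mem hxt, ?_⟩
        simp only [Multiset.sum_cons, Multiset.card_cons]
        push_cast
        nlinarith
      · refine ⟨a, Multiset.mem_cons_self a t, ?_⟩
        simp only [Multiset.sum_cons, Multiset.card_cons]
        have hcard : (0:ℝ) ≤ t.card := by positivity
        push_cast
        nlinarith

lemma step (k : ℕ) (hk : 0 < k) (t : ℝ) (ht : 0 < t) (s : Multiset ℕ∞)
    (hcard : s.card = k) (hge : ∀ x ∈ s, 3 ≤ x)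
    (hsum : (s.map einv).sum = t) :
    ∃ (m : ℕ) (s' : Multiset ℕ∞), 3 ≤ m ∧ (m : ℝ) * t ≤ k ∧ 1 ≤ (m : ℝ) * t ∧
      s = (m : ℕ∞) ::ₘ s' ∧ s'.card = k - 1 ∧ (∀ x ∈ s', 3 ≤ x) ∧
      (s'.map einv).sum = t - (m : ℝ)⁻¹ := by
  have hs0 : s ≠ 0 := by
    intro h; rw [h] at hcard; simp at hcard; omega
  obtain ⟨y, hy, hyavg⟩ := exists_avg (s.map einv) (by simpa using hs0)
  obtain ⟨x, hxs, rfl⟩ := Multiset.mem_map.mp hy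
  rw [hsum, Multiset.card_map, hcard] at hyavg
  have hy0 : 0 < einv x := by
    rcases lt_or_ge 0 (einv x) with h | h
    · exact h
    · exfalso
      have : (k:ℝ) * einv x ≤ 0 := mul_nonpos_of_nonneg_of_nonpos (by positivity) h
      linarith
  obtain ⟨m, rfl⟩ : ∃ m : ℕ, x = (m : ℕ∞) := by
    cases x with
    | top => rw [einv_top] at hy0; exact absurd hy0 (by norm_num)
    | coe m => exact ⟨m, rfl⟩
  rw [einv_coe] at hy0 hyavg
  have hm0 : 0 < m := by
    by_contra h
    push_neg at h
    interval_cases m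
    simp at hy0
  have hm0' : (0:ℝ) < m := by exact_mod_cast hm0
  have hm3 : 3 ≤ m := by
    have := hge _ hxs
    exact_mod_cast this
  obtain ⟨s', rfl⟩ := Multiset.exists_cons_of_mem hxs
  refine ⟨m, s', hm3, ?_, ?_, rfl, ?_, ?_, ?_⟩
  · calc (m:ℝ) * t ≤ (m:ℝ) * ((k:ℝ) * (m:ℝ)⁻¹) := by
          apply mul_le_mul_of_nonneg_left hyavg (by positivity)
       _ = k := by field_simp
  · have h1 : (m:ℝ)⁻¹ ≤ t := by
      have hrest : 0 ≤ (s'.map einv).sum :=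
        Multiset.sum_nonneg (by
          intro z hz
          obtain ⟨w, _, rfl⟩ := Multiset.mem_map.mp hz
          exact einv_nonneg w)
      rw [Multiset.map_cons, Multiset.sum_cons, einv_coe] at hsum
      linarith
    calc (1:ℝ) = m * (m:ℝ)⁻¹ := by field_simp
      _ ≤ m * t := mul_le_mul_of_nonneg_left h1 (by positivity)
  · rw [Multiset.card_cons] at hcard; omega
  · intro z hz; exact hge z (Multiset.mem_cons_of_mem hz)
  · rw [Multiset.map_cons, Multiset.sum_cons, einv_coe] at hsum
    linarith

lemma leaf_no (s : Multiset ℕ∞) (hcard : s.card = 1) (p q : ℕ) (hq : 0 < q) (hp : 0 < p)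
    (hsum : (s.map einv).sum = (p : ℝ) / q) (h : ∀ m : ℕ, m * p ≠ q) : False := by
  obtain ⟨x, rfl⟩ := Multiset.card_eq_one.mp hcard
  rw [Multiset.map_singleton, Multiset.sum_singleton] at hsum
  have hp' : (0:ℝ) < p := by exact_mod_cast hp
  have hq' : (0:ℝ) < q := by exact_mod_cast hq
  cases x with
  | top =>
    rw [einv_top] at hsum
    have : (0:ℝ) < (p:ℝ)/q := by positivity
    linarith
  | coe m =>
    rw [einv_coe] at hsum
    have hm0 : 0 < m := by
      by_contra h0
      push_neg at h0
      interval_cases m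
      simp at hsum
      have : (0:ℝ) < (p:ℝ)/q := by positivity
      linarith
    have hm0' : (0:ℝ) < m := by exact_mod_cast hm0
    have : (m:ℝ) * p = q := by field_simp at hsum; linarith
    have : m * p = q := by exact_mod_cast this
    exact h m this

lemma leaf_yes (s : Multiset ℕ∞) (hcard : s.card = 1) (r : ℕ) (hr : 0 < r)
    (hsum : (s.map einv).sum = (r : ℝ)⁻¹) : s = {(r : ℕ∞)} := by
  obtain ⟨x, rfl⟩ := Multiset.card_eq_one.mp hcard
  rw [Multiset.map_singleton, Multiset.sum_singleton] at hsum
  have hr' : (0:ℝ) < r := by exact_mod_cast hr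
  cases x with
  | top =>
    rw [einv_top] at hsum
    exfalso
    have : (0:ℝ) < (r:ℝ)⁻¹ := by positivity
    linarith
  | coe m =>
    rw [einv_coe] at hsum
    have : m = r := by
      have hm0 : 0 < m := by
        by_contra h0
        push_neg at h0
        interval_cases m
        simp at hsum
        have : (0:ℝ) < (r:ℝ)⁻¹ := by positivity
        linarith
      have hm0' : (0:ℝ) < m := by exact_mod_cast hm0
      have : (m:ℝ) = r := by
        have := inv_injective hsum
        exact_mod_cast this
      exact_mod_cast this
    rw [this]

set_option maxHeartbeats 1600000 in
lemma master (n : ℕ) (hn : 3 ≤ n) (S0 : Multiset ℕ∞) (hc0 : S0.card = n)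
    (hge0 : ∀ x ∈ S0, 3 ≤ x)
    (hsum0 : (S0.map einv).sum = (n:ℝ)/2 - 1 - 1/1806) :
    n = 3 ∧ S0 = {3, 7, 43} := by
  have hle : ∀ y ∈ S0.map einv, y ≤ (3:ℝ)⁻¹ := by
    intro y hy
    obtain ⟨x, hx, rfl⟩ := Multiset.mem_map.mp hy
    exact einv_le_third (hge0 x hx)
  have hsumle : (S0.map einv).sum ≤ (S0.map einv).card • ((3:ℝ)⁻¹) :=
    Multiset.sum_le_card_nsmul _ _ hle
  rw [Multiset.card_map, hc0, hsum0, nsmul_eq_mul] at hsumle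
  have h7 : n < 7 := by
    have : (n:ℝ) < 7 := by linarith
    exact_mod_cast this
  interval_cases n
  · -- n = 3
    have hs0 : (S0.map einv).sum = (451:ℝ)/903 := by rw [hsum0]; push_cast; norm_num
    obtain ⟨m0, S1, hm0, hub0, hlb0, heq0, hc1, hge1, hs1⟩ :=
      step 3 (by norm_num) ((451:ℝ)/903) (by norm_num) S0 (by omega) hge0 hs0
    push_cast at hub0 hlb0
    have hub0' : m0 * 451 ≤ 2709 := by exact_mod_cast (by linarith : (m0:ℝ) * 451 ≤ 2709)
    have hlb0' : 903 ≤ m0 * 451 := by exact_mod_cast (by linarith : (903:ℝ) ≤ (m0:ℝ) * 451)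
    have hlo0 : 3 ≤ m0 := by omega
    have hhi0 : m0 ≤ 6 := by omega
    interval_cases m0
    · -- m = 3, remaining target 50/301
      have hs1' : (S1.map einv).sum = (50:ℝ)/301 := by rw [hs1]; push_cast; norm_num
      clear hs1
      have hs1 := hs1'
      obtain ⟨m1, S2, hm1, hub1, hlb1, heq1, hc2, hge2, hs2⟩ :=
        step 2 (by norm_num) ((50:ℝ)/301) (by norm_num) S1 (by omega) hge1 hs1
      push_cast at hub1 hlb1
      have hub1' : m1 * 50 ≤ 602 := by exact_mod_cast (by linarith : (m1:ℝ) * 50 ≤ 602)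
      have hlb1' : 301 ≤ m1 * 50 := by exact_mod_cast (by linarith : (301:ℝ) ≤ (m1:ℝ) * 50)
      have hlo1 : 7 ≤ m1 := by omega
      have hhi1 : m1 ≤ 12 := by omega
      interval_cases m1
      · -- m = 7, remaining target 1/43
        have hs2' : (S2.map einv).sum = (1:ℝ)/43 := by rw [hs2]; push_cast; norm_num
        clear hs2
        have hs2 := hs2'
        have hfin : S2 = {((43:ℕ) : ℕ∞)} := leaf_yes S2 (by omega) 43 (by norm_num) (by rw [hs2]; norm_num)
        refine ⟨rfl, ?_⟩
        rw [heq0, heq1, hfin]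
        rfl
      · -- m = 8, remaining target 99/2408
        have hs2' : (S2.map einv).sum = (99:ℝ)/2408 := by rw [hs2]; push_cast; norm_num
        clear hs2
        have hs2 := hs2'
        exact (leaf_no S2 (by omega) 99 2408 (by norm_num) (by norm_num) (by exact_mod_cast hs2) (by intro x; omega)).elim
      · -- m = 9, remaining target 149/2709
        have hs2' : (S2.map einv).sum = (149:ℝ)/2709 := by rw [hs2]; push_cast; norm_num
        clear hs2
        have hs2 := hs2'
        exact (leaf_no S2 (by omega) 149 2709 (by norm_num) (by norm_num) (by exact_mod_cast hs2) (by intro x; omega)).elim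
      · -- m = 10, remaining target 199/3010
        have hs2' : (S2.map einv).sum = (199:ℝ)/3010 := by rw [hs2]; push_cast; norm_num
        clear hs2
        have hs2 := hs2'
        exact (leaf_no S2 (by omega) 199 3010 (by norm_num) (by norm_num) (by exact_mod_cast hs2) (by intro x; omega)).elim
      · -- m = 11, remaining target 249/3311
        have hs2' : (S2.map einv).sum = (249:ℝ)/3311 := by rw [hs2]; push_cast; norm_num
        clear hs2
        have hs2 := hs2'
        exact (leaf_no S2 (by omega) 249 3311 (by norm_num) (by norm_num) (by exact_mod_cast hs2) (by intro x; omega)).elim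
      · -- m = 12, remaining target 299/3612
        have hs2' : (S2.map einv).sum = (299:ℝ)/3612 := by rw [hs2]; push_cast; norm_num
        clear hs2
        have hs2 := hs2'
        exact (leaf_no S2 (by omega) 299 3612 (by norm_num) (by norm_num) (by exact_mod_cast hs2) (by intro x; omega)).elim
    · -- m = 4, remaining target 901/3612
      have hs1' : (S1.map einv).sum = (901:ℝ)/3612 := by rw [hs1]; push_cast; norm_num
      clear hs1
      have hs1 := hs1'
      obtain ⟨m1, S2, hm1, hub1, hlb1, heq1, hc2, hge2, hs2⟩ :=
        step 2 (by norm_num) ((901:ℝ)/3612) (by norm_num) S1 (by omega) hge1 hs1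
      push_cast at hub1 hlb1
      have hub1' : m1 * 901 ≤ 7224 := by exact_mod_cast (by linarith : (m1:ℝ) * 901 ≤ 7224)
      have hlb1' : 3612 ≤ m1 * 901 := by exact_mod_cast (by linarith : (3612:ℝ) ≤ (m1:ℝ) * 901)
      have hlo1 : 5 ≤ m1 := by omega
      have hhi1 : m1 ≤ 8 := by omega
      interval_cases m1
      · -- m = 5, remaining target 893/18060
        have hs2' : (S2.map einv).sum = (893:ℝ)/18060 := by rw [hs2]; push_cast; norm_num
        clear hs2
        have hs2 := hs2'
        exact (leaf_no S2 (by omega) 893 18060 (by norm_num) (by norm_num) (by exact_mod_cast hs2) (by intro x; omega)).elim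
      · -- m = 6, remaining target 299/3612
        have hs2' : (S2.map einv).sum = (299:ℝ)/3612 := by rw [hs2]; push_cast; norm_num
        clear hs2
        have hs2 := hs2'
        exact (leaf_no S2 (by omega) 299 3612 (by norm_num) (by norm_num) (by exact_mod_cast hs2) (by intro x; omega)).elim
      · -- m = 7, remaining target 55/516
        have hs2' : (S2.map einv).sum = (55:ℝ)/516 := by rw [hs2]; push_cast; norm_num
        clear hs2
        have hs2 := hs2'
        exact (leaf_no S2 (by omega) 55 516 (by norm_num) (by norm_num) (by exact_mod_cast hs2) (by intro x; omega)).elim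
      · -- m = 8, remaining target 899/7224
        have hs2' : (S2.map einv).sum = (899:ℝ)/7224 := by rw [hs2]; push_cast; norm_num
        clear hs2
        have hs2 := hs2'
        exact (leaf_no S2 (by omega) 899 7224 (by norm_num) (by norm_num) (by exact_mod_cast hs2) (by intro x; omega)).elim
    · -- m = 5, remaining target 1352/4515
      have hs1' : (S1.map einv).sum = (1352:ℝ)/4515 := by rw [hs1]; push_cast; norm_num
      clear hs1
      have hs1 := hs1'
      obtain ⟨m1, S2, hm1, hub1, hlb1, heq1, hc2, hge2, hs2⟩ :=
        step 2 (by norm_num) ((1352:ℝ)/4515) (by norm_num) S1 (by omega) hge1 hs1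
      push_cast at hub1 hlb1
      have hub1' : m1 * 1352 ≤ 9030 := by exact_mod_cast (by linarith : (m1:ℝ) * 1352 ≤ 9030)
      have hlb1' : 4515 ≤ m1 * 1352 := by exact_mod_cast (by linarith : (4515:ℝ) ≤ (m1:ℝ) * 1352)
      have hlo1 : 4 ≤ m1 := by omega
      have hhi1 : m1 ≤ 6 := by omega
      interval_cases m1
      · -- m = 4, remaining target 893/18060
        have hs2' : (S2.map einv).sum = (893:ℝ)/18060 := by rw [hs2]; push_cast; norm_num
        clear hs2
        have hs2 := hs2'
        exact (leaf_no S2 (by omega) 893 18060 (by norm_num) (by norm_num) (by exact_mod_cast hs2) (by intro x; omega)).elim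
      · -- m = 5, remaining target 449/4515
        have hs2' : (S2.map einv).sum = (449:ℝ)/4515 := by rw [hs2]; push_cast; norm_num
        clear hs2
        have hs2 := hs2'
        exact (leaf_no S2 (by omega) 449 4515 (by norm_num) (by norm_num) (by exact_mod_cast hs2) (by intro x; omega)).elim
      · -- m = 6, remaining target 1199/9030
        have hs2' : (S2.map einv).sum = (1199:ℝ)/9030 := by rw [hs2]; push_cast; norm_num
        clear hs2
        have hs2 := hs2'
        exact (leaf_no S2 (by omega) 1199 9030 (by norm_num) (by norm_num) (by exact_mod_cast hs2) (by intro x; omega)).elim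
    · -- m = 6, remaining target 601/1806
      have hs1' : (S1.map einv).sum = (601:ℝ)/1806 := by rw [hs1]; push_cast; norm_num
      clear hs1
      have hs1 := hs1'
      obtain ⟨m1, S2, hm1, hub1, hlb1, heq1, hc2, hge2, hs2⟩ :=
        step 2 (by norm_num) ((601:ℝ)/1806) (by norm_num) S1 (by omega) hge1 hs1
      push_cast at hub1 hlb1
      have hub1' : m1 * 601 ≤ 3612 := by exact_mod_cast (by linarith : (m1:ℝ) * 601 ≤ 3612)
      have hlb1' : 1806 ≤ m1 * 601 := by exact_mod_cast (by linarith : (1806:ℝ) ≤ (m1:ℝ) * 601)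
      have hlo1 : 4 ≤ m1 := by omega
      have hhi1 : m1 ≤ 6 := by omega
      interval_cases m1
      · -- m = 4, remaining target 299/3612
        have hs2' : (S2.map einv).sum = (299:ℝ)/3612 := by rw [hs2]; push_cast; norm_num
        clear hs2
        have hs2 := hs2'
        exact (leaf_no S2 (by omega) 299 3612 (by norm_num) (by norm_num) (by exact_mod_cast hs2) (by intro x; omega)).elim
      · -- m = 5, remaining target 1199/9030
        have hs2' : (S2.map einv).sum = (1199:ℝ)/9030 := by rw [hs2]; push_cast; norm_num
        clear hs2
        have hs2 := hs2'
        exact (leaf_no S2 (by omega) 1199 9030 (by norm_num) (by norm_num) (by exact_mod_cast hs2) (by intro x; omega)).elim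
      · -- m = 6, remaining target 50/301
        have hs2' : (S2.map einv).sum = (50:ℝ)/301 := by rw [hs2]; push_cast; norm_num
        clear hs2
        have hs2 := hs2'
        exact (leaf_no S2 (by omega) 50 301 (by norm_num) (by norm_num) (by exact_mod_cast hs2) (by intro x; omega)).elim
  · -- n = 4
    have hs0 : (S0.map einv).sum = (1805:ℝ)/1806 := by rw [hsum0]; push_cast; norm_num
    obtain ⟨m0, S1, hm0, hub0, hlb0, heq0, hc1, hge1, hs1⟩ :=
      step 4 (by norm_num) ((1805:ℝ)/1806) (by norm_num) S0 (by omega) hge0 hs0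
    push_cast at hub0 hlb0
    have hub0' : m0 * 1805 ≤ 7224 := by exact_mod_cast (by linarith : (m0:ℝ) * 1805 ≤ 7224)
    have hlb0' : 1806 ≤ m0 * 1805 := by exact_mod_cast (by linarith : (1806:ℝ) ≤ (m0:ℝ) * 1805)
    have hlo0 : 3 ≤ m0 := by omega
    have hhi0 : m0 ≤ 4 := by omega
    interval_cases m0
    · -- m = 3, remaining target 401/602
      have hs1' : (S1.map einv).sum = (401:ℝ)/602 := by rw [hs1]; push_cast; norm_num
      clear hs1
      have hs1 := hs1'
      obtain ⟨m1, S2, hm1, hub1, hlb1, heq1, hc2, hge2, hs2⟩ :=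
        step 3 (by norm_num) ((401:ℝ)/602) (by norm_num) S1 (by omega) hge1 hs1
      push_cast at hub1 hlb1
      have hub1' : m1 * 401 ≤ 1806 := by exact_mod_cast (by linarith : (m1:ℝ) * 401 ≤ 1806)
      have hlb1' : 602 ≤ m1 * 401 := by exact_mod_cast (by linarith : (602:ℝ) ≤ (m1:ℝ) * 401)
      have hlo1 : 3 ≤ m1 := by omega
      have hhi1 : m1 ≤ 4 := by omega
      interval_cases m1
      · -- m = 3, remaining target 601/1806
        have hs2' : (S2.map einv).sum = (601:ℝ)/1806 := by rw [hs2]; push_cast; norm_num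
        clear hs2
        have hs2 := hs2'
        obtain ⟨m2, S3, hm2, hub2, hlb2, heq2, hc3, hge3, hs3⟩ :=
          step 2 (by norm_num) ((601:ℝ)/1806) (by norm_num) S2 (by omega) hge2 hs2
        push_cast at hub2 hlb2
        have hub2' : m2 * 601 ≤ 3612 := by exact_mod_cast (by linarith : (m2:ℝ) * 601 ≤ 3612)
        have hlb2' : 1806 ≤ m2 * 601 := by exact_mod_cast (by linarith : (1806:ℝ) ≤ (m2:ℝ) * 601)
        have hlo2 : 4 ≤ m2 := by omega
        have hhi2 : m2 ≤ 6 := by omega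
        interval_cases m2
        · -- m = 4, remaining target 299/3612
          have hs3' : (S3.map einv).sum = (299:ℝ)/3612 := by rw [hs3]; push_cast; norm_num
          clear hs3
          have hs3 := hs3'
          exact (leaf_no S3 (by omega) 299 3612 (by norm_num) (by norm_num) (by exact_mod_cast hs3) (by intro x; omega)).elim
        · -- m = 5, remaining target 1199/9030
          have hs3' : (S3.map einv).sum = (1199:ℝ)/9030 := by rw [hs3]; push_cast; norm_num
          clear hs3
          have hs3 := hs3'
          exact (leaf_no S3 (by omega) 1199 9030 (by norm_num) (by norm_num) (by exact_mod_cast hs3) (by intro x; omega)).elim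
        · -- m = 6, remaining target 50/301
          have hs3' : (S3.map einv).sum = (50:ℝ)/301 := by rw [hs3]; push_cast; norm_num
          clear hs3
          have hs3 := hs3'
          exact (leaf_no S3 (by omega) 50 301 (by norm_num) (by norm_num) (by exact_mod_cast hs3) (by intro x; omega)).elim
      · -- m = 4, remaining target 501/1204
        have hs2' : (S2.map einv).sum = (501:ℝ)/1204 := by rw [hs2]; push_cast; norm_num
        clear hs2
        have hs2 := hs2'
        obtain ⟨m2, S3, hm2, hub2, hlb2, heq2, hc3, hge3, hs3⟩ :=
          step 2 (by norm_num) ((501:ℝ)/1204) (by norm_num) S2 (by omega) hge2 hs2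
        push_cast at hub2 hlb2
        have hub2' : m2 * 501 ≤ 2408 := by exact_mod_cast (by linarith : (m2:ℝ) * 501 ≤ 2408)
        have hlb2' : 1204 ≤ m2 * 501 := by exact_mod_cast (by linarith : (1204:ℝ) ≤ (m2:ℝ) * 501)
        have hlo2 : 3 ≤ m2 := by omega
        have hhi2 : m2 ≤ 4 := by omega
        interval_cases m2
        · -- m = 3, remaining target 299/3612
          have hs3' : (S3.map einv).sum = (299:ℝ)/3612 := by rw [hs3]; push_cast; norm_num
          clear hs3
          have hs3 := hs3'
          exact (leaf_no S3 (by omega) 299 3612 (by norm_num) (by norm_num) (by exact_mod_cast hs3) (by intro x; omega)).elim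
        · -- m = 4, remaining target 50/301
          have hs3' : (S3.map einv).sum = (50:ℝ)/301 := by rw [hs3]; push_cast; norm_num
          clear hs3
          have hs3 := hs3'
          exact (leaf_no S3 (by omega) 50 301 (by norm_num) (by norm_num) (by exact_mod_cast hs3) (by intro x; omega)).elim
    · -- m = 4, remaining target 2707/3612
      have hs1' : (S1.map einv).sum = (2707:ℝ)/3612 := by rw [hs1]; push_cast; norm_num
      clear hs1
      have hs1 := hs1'
      obtain ⟨m1, S2, hm1, hub1, hlb1, heq1, hc2, hge2, hs2⟩ :=
        step 3 (by norm_num) ((2707:ℝ)/3612) (by norm_num) S1 (by omega) hge1 hs1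
      push_cast at hub1 hlb1
      have hub1' : m1 * 2707 ≤ 10836 := by exact_mod_cast (by linarith : (m1:ℝ) * 2707 ≤ 10836)
      have hlb1' : 3612 ≤ m1 * 2707 := by exact_mod_cast (by linarith : (3612:ℝ) ≤ (m1:ℝ) * 2707)
      have hlo1 : 3 ≤ m1 := by omega
      have hhi1 : m1 ≤ 4 := by omega
      interval_cases m1
      · -- m = 3, remaining target 501/1204
        have hs2' : (S2.map einv).sum = (501:ℝ)/1204 := by rw [hs2]; push_cast; norm_num
        clear hs2
        have hs2 := hs2'
        obtain ⟨m2, S3, hm2, hub2, hlb2, heq2, hc3, hge3, hs3⟩ :=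
          step 2 (by norm_num) ((501:ℝ)/1204) (by norm_num) S2 (by omega) hge2 hs2
        push_cast at hub2 hlb2
        have hub2' : m2 * 501 ≤ 2408 := by exact_mod_cast (by linarith : (m2:ℝ) * 501 ≤ 2408)
        have hlb2' : 1204 ≤ m2 * 501 := by exact_mod_cast (by linarith : (1204:ℝ) ≤ (m2:ℝ) * 501)
        have hlo2 : 3 ≤ m2 := by omega
        have hhi2 : m2 ≤ 4 := by omega
        interval_cases m2
        · -- m = 3, remaining target 299/3612
          have hs3' : (S3.map einv).sum = (299:ℝ)/3612 := by rw [hs3]; push_cast; norm_num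
          clear hs3
          have hs3 := hs3'
          exact (leaf_no S3 (by omega) 299 3612 (by norm_num) (by norm_num) (by exact_mod_cast hs3) (by intro x; omega)).elim
        · -- m = 4, remaining target 50/301
          have hs3' : (S3.map einv).sum = (50:ℝ)/301 := by rw [hs3]; push_cast; norm_num
          clear hs3
          have hs3 := hs3'
          exact (leaf_no S3 (by omega) 50 301 (by norm_num) (by norm_num) (by exact_mod_cast hs3) (by intro x; omega)).elim
      · -- m = 4, remaining target 451/903
        have hs2' : (S2.map einv).sum = (451:ℝ)/903 := by rw [hs2]; push_cast; norm_num
        clear hs2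
        have hs2 := hs2'
        obtain ⟨m2, S3, hm2, hub2, hlb2, heq2, hc3, hge3, hs3⟩ :=
          step 2 (by norm_num) ((451:ℝ)/903) (by norm_num) S2 (by omega) hge2 hs2
        push_cast at hub2 hlb2
        have hub2' : m2 * 451 ≤ 1806 := by exact_mod_cast (by linarith : (m2:ℝ) * 451 ≤ 1806)
        have hlb2' : 903 ≤ m2 * 451 := by exact_mod_cast (by linarith : (903:ℝ) ≤ (m2:ℝ) * 451)
        have hlo2 : 3 ≤ m2 := by omega
        have hhi2 : m2 ≤ 4 := by omega
        interval_cases m2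
        · -- m = 3, remaining target 50/301
          have hs3' : (S3.map einv).sum = (50:ℝ)/301 := by rw [hs3]; push_cast; norm_num
          clear hs3
          have hs3 := hs3'
          exact (leaf_no S3 (by omega) 50 301 (by norm_num) (by norm_num) (by exact_mod_cast hs3) (by intro x; omega)).elim
        · -- m = 4, remaining target 901/3612
          have hs3' : (S3.map einv).sum = (901:ℝ)/3612 := by rw [hs3]; push_cast; norm_num
          clear hs3
          have hs3 := hs3'
          exact (leaf_no S3 (by omega) 901 3612 (by norm_num) (by norm_num) (by exact_mod_cast hs3) (by intro x; omega)).elim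
  · -- n = 5
    have hs0 : (S0.map einv).sum = (1354:ℝ)/903 := by rw [hsum0]; push_cast; norm_num
    obtain ⟨m0, S1, hm0, hub0, hlb0, heq0, hc1, hge1, hs1⟩ :=
      step 5 (by norm_num) ((1354:ℝ)/903) (by norm_num) S0 (by omega) hge0 hs0
    push_cast at hub0 hlb0
    have hub0' : m0 * 1354 ≤ 4515 := by exact_mod_cast (by linarith : (m0:ℝ) * 1354 ≤ 4515)
    have hlb0' : 903 ≤ m0 * 1354 := by exact_mod_cast (by linarith : (903:ℝ) ≤ (m0:ℝ) * 1354)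
    have hlo0 : 3 ≤ m0 := by omega
    have hhi0 : m0 ≤ 3 := by omega
    interval_cases m0
    · -- m = 3, remaining target 351/301
      have hs1' : (S1.map einv).sum = (351:ℝ)/301 := by rw [hs1]; push_cast; norm_num
      clear hs1
      have hs1 := hs1'
      obtain ⟨m1, S2, hm1, hub1, hlb1, heq1, hc2, hge2, hs2⟩ :=
        step 4 (by norm_num) ((351:ℝ)/301) (by norm_num) S1 (by omega) hge1 hs1
      push_cast at hub1 hlb1
      have hub1' : m1 * 351 ≤ 1204 := by exact_mod_cast (by linarith : (m1:ℝ) * 351 ≤ 1204)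
      have hlb1' : 301 ≤ m1 * 351 := by exact_mod_cast (by linarith : (301:ℝ) ≤ (m1:ℝ) * 351)
      have hlo1 : 3 ≤ m1 := by omega
      have hhi1 : m1 ≤ 3 := by omega
      interval_cases m1
      · -- m = 3, remaining target 752/903
        have hs2' : (S2.map einv).sum = (752:ℝ)/903 := by rw [hs2]; push_cast; norm_num
        clear hs2
        have hs2 := hs2'
        obtain ⟨m2, S3, hm2, hub2, hlb2, heq2, hc3, hge3, hs3⟩ :=
          step 3 (by norm_num) ((752:ℝ)/903) (by norm_num) S2 (by omega) hge2 hs2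
        push_cast at hub2 hlb2
        have hub2' : m2 * 752 ≤ 2709 := by exact_mod_cast (by linarith : (m2:ℝ) * 752 ≤ 2709)
        have hlb2' : 903 ≤ m2 * 752 := by exact_mod_cast (by linarith : (903:ℝ) ≤ (m2:ℝ) * 752)
        have hlo2 : 3 ≤ m2 := by omega
        have hhi2 : m2 ≤ 3 := by omega
        interval_cases m2
        · -- m = 3, remaining target 451/903
          have hs3' : (S3.map einv).sum = (451:ℝ)/903 := by rw [hs3]; push_cast; norm_num
          clear hs3
          have hs3 := hs3'
          obtain ⟨m3, S4, hm3, hub3, hlb3, heq3, hc4, hge4, hs4⟩ :=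
            step 2 (by norm_num) ((451:ℝ)/903) (by norm_num) S3 (by omega) hge3 hs3
          push_cast at hub3 hlb3
          have hub3' : m3 * 451 ≤ 1806 := by exact_mod_cast (by linarith : (m3:ℝ) * 451 ≤ 1806)
          have hlb3' : 903 ≤ m3 * 451 := by exact_mod_cast (by linarith : (903:ℝ) ≤ (m3:ℝ) * 451)
          have hlo3 : 3 ≤ m3 := by omega
          have hhi3 : m3 ≤ 4 := by omega
          interval_cases m3
          · -- m = 3, remaining target 50/301
            have hs4' : (S4.map einv).sum = (50:ℝ)/301 := by rw [hs4]; push_cast; norm_num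
            clear hs4
            have hs4 := hs4'
            exact (leaf_no S4 (by omega) 50 301 (by norm_num) (by norm_num) (by exact_mod_cast hs4) (by intro x; omega)).elim
          · -- m = 4, remaining target 901/3612
            have hs4' : (S4.map einv).sum = (901:ℝ)/3612 := by rw [hs4]; push_cast; norm_num
            clear hs4
            have hs4 := hs4'
            exact (leaf_no S4 (by omega) 901 3612 (by norm_num) (by norm_num) (by exact_mod_cast hs4) (by intro x; omega)).elim
  · -- n = 6
    have hs0 : (S0.map einv).sum = (3611:ℝ)/1806 := by rw [hsum0]; push_cast; norm_num
    obtain ⟨m0, S1, hm0, hub0, hlb0, heq0, hc1, hge1, hs1⟩ :=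
      step 6 (by norm_num) ((3611:ℝ)/1806) (by norm_num) S0 (by omega) hge0 hs0
    push_cast at hub0 hlb0
    have hub0' : m0 * 3611 ≤ 10836 := by exact_mod_cast (by linarith : (m0:ℝ) * 3611 ≤ 10836)
    have hlb0' : 1806 ≤ m0 * 3611 := by exact_mod_cast (by linarith : (1806:ℝ) ≤ (m0:ℝ) * 3611)
    have hlo0 : 3 ≤ m0 := by omega
    have hhi0 : m0 ≤ 3 := by omega
    interval_cases m0
    · -- m = 3, remaining target 1003/602
      have hs1' : (S1.map einv).sum = (1003:ℝ)/602 := by rw [hs1]; push_cast; norm_num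
      clear hs1
      have hs1 := hs1'
      obtain ⟨m1, S2, hm1, hub1, hlb1, heq1, hc2, hge2, hs2⟩ :=
        step 5 (by norm_num) ((1003:ℝ)/602) (by norm_num) S1 (by omega) hge1 hs1
      push_cast at hub1 hlb1
      have hub1' : m1 * 1003 ≤ 3010 := by exact_mod_cast (by linarith : (m1:ℝ) * 1003 ≤ 3010)
      have hlb1' : 602 ≤ m1 * 1003 := by exact_mod_cast (by linarith : (602:ℝ) ≤ (m1:ℝ) * 1003)
      have hlo1 : 3 ≤ m1 := by omega
      have hhi1 : m1 ≤ 3 := by omega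
      interval_cases m1
      · -- m = 3, remaining target 2407/1806
        have hs2' : (S2.map einv).sum = (2407:ℝ)/1806 := by rw [hs2]; push_cast; norm_num
        clear hs2
        have hs2 := hs2'
        obtain ⟨m2, S3, hm2, hub2, hlb2, heq2, hc3, hge3, hs3⟩ :=
          step 4 (by norm_num) ((2407:ℝ)/1806) (by norm_num) S2 (by omega) hge2 hs2
        push_cast at hub2 hlb2
        have hub2' : m2 * 2407 ≤ 7224 := by exact_mod_cast (by linarith : (m2:ℝ) * 2407 ≤ 7224)
        have hlb2' : 1806 ≤ m2 * 2407 := by exact_mod_cast (by linarith : (1806:ℝ) ≤ (m2:ℝ) * 2407)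
        have hlo2 : 3 ≤ m2 := by omega
        have hhi2 : m2 ≤ 3 := by omega
        interval_cases m2
        · -- m = 3, remaining target 1805/1806
          have hs3' : (S3.map einv).sum = (1805:ℝ)/1806 := by rw [hs3]; push_cast; norm_num
          clear hs3
          have hs3 := hs3'
          obtain ⟨m3, S4, hm3, hub3, hlb3, heq3, hc4, hge4, hs4⟩ :=
            step 3 (by norm_num) ((1805:ℝ)/1806) (by norm_num) S3 (by omega) hge3 hs3
          push_cast at hub3 hlb3
          have hub3' : m3 * 1805 ≤ 5418 := by exact_mod_cast (by linarith : (m3:ℝ) * 1805 ≤ 5418)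
          have hlb3' : 1806 ≤ m3 * 1805 := by exact_mod_cast (by linarith : (1806:ℝ) ≤ (m3:ℝ) * 1805)
          have hlo3 : 3 ≤ m3 := by omega
          have hhi3 : m3 ≤ 3 := by omega
          interval_cases m3
          · -- m = 3, remaining target 401/602
            have hs4' : (S4.map einv).sum = (401:ℝ)/602 := by rw [hs4]; push_cast; norm_num
            clear hs4
            have hs4 := hs4'
            obtain ⟨m4, S5, hm4, hub4, hlb4, heq4, hc5, hge5, hs5⟩ :=
              step 2 (by norm_num) ((401:ℝ)/602) (by norm_num) S4 (by omega) hge4 hs4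
            push_cast at hub4 hlb4
            have hub4' : m4 * 401 ≤ 1204 := by exact_mod_cast (by linarith : (m4:ℝ) * 401 ≤ 1204)
            have hlb4' : 602 ≤ m4 * 401 := by exact_mod_cast (by linarith : (602:ℝ) ≤ (m4:ℝ) * 401)
            have hlo4 : 3 ≤ m4 := by omega
            have hhi4 : m4 ≤ 3 := by omega
            interval_cases m4
            · -- m = 3, remaining target 601/1806
              have hs5' : (S5.map einv).sum = (601:ℝ)/1806 := by rw [hs5]; push_cast; norm_num
              clear hs5
              have hs5 := hs5'
              exact (leaf_no S5 (by omega) 601 1806 (by norm_num) (by norm_num) (by exact_mod_cast hs5) (by intro x; omega)).elim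

/-- If `n ≥ 3`, `l₁, …, lₙ ∈ ℕ ∪ {∞}` all satisfy `lᵢ ≥ 3` and the curvature
`κ = 1 − n/2 + Σᵢ 1/lᵢ` (with `1/∞ = 0`) is strictly negative, then `κ = −1/1806`
if and only if `n = 3` and the multiset `{l₁, l₂, l₃}` equals `{3, 7, 43}`. -/
theorem stmt_1 (n : ℕ) (hn : 3 ≤ n) (l : Fin n → ℕ∞) (hl : ∀ i, 3 ≤ l i)
    (hneg : 1 - (n : ℝ) / 2 + ∑ i, einv (l i) < 0) :
    (1 - (n : ℝ) / 2 + ∑ i, einv (l i) = -1 / 1806) ↔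
      (n = 3 ∧ Finset.univ.val.map l = ({3, 7, 43} : Multiset ℕ∞)) := by
  have hkey : ∑ i, einv (l i) = ((Finset.univ.val.map l).map einv).sum := by
    rw [Multiset.map_map]
    rfl
  constructor
  · intro h
    have hsum : ((Finset.univ.val.map l).map einv).sum = (n:ℝ)/2 - 1 - 1/1806 := by
      rw [← hkey]; linarith
    have hcard : (Finset.univ.val.map l).card = n := by simp
    have hge : ∀ x ∈ Finset.univ.val.map l, 3 ≤ x := by
      intro x hx
      obtain ⟨i, _, rfl⟩ := Multiset.mem_map.mp hx
      exact hl i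
    exact master n hn _ hcard hge hsum
  · rintro ⟨rfl, hmap⟩
    rw [hkey, hmap]
    have e3 : einv 3 = (3:ℝ)⁻¹ := rfl
    have e7 : einv 7 = (7:ℝ)⁻¹ := rfl
    have e43 : einv 43 = (43:ℝ)⁻¹ := rfl
    simp only [Multiset.insert_eq_cons, Multiset.map_cons, Multiset.sum_cons,
      Multiset.map_singleton, Multiset.sum_singleton, e3, e7, e43]
    norm_num
end

section
/- Let T be a locally finite tree (a connected simple graph with no cycles, all of whose vertex degrees are finite) in which every vertex has degree at least 2, and let a : V → V → ℂ satisfy, for all distinct vertices v, w: a(v,w) ≠ 0 if v and w are adjacent, and a(v,w) = 0 if v and w are not adjacent (the diagonal values a(v,v) are arbitrary). Then for every λ ∈ ℂ, the only finitely supported function φ : V → ℂ satisfying a(v,v)φ(v) + Σ_{w adjacent to v} a(v,w) φ(w) = λ φ(v) for all v ∈ V is φ ≡ 0. -/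
open SimpleGraph

/-- Appending an edge to a path whose new endpoint is fresh yields a path. -/
lemma aux_concat_isPath {V : Type*} {G : SimpleGraph V} {u v w : V} {p : G.Walk u v}
    (hp : p.IsPath) (h : G.Adj v w) (hw : w ∉ p.support) : (p.concat h).IsPath := by
  rw [← Walk.isPath_reverse_iff, Walk.reverse_concat]
  exact hp.reverse.cons (by simpa [Walk.support_reverse] using hw)

/-- In a tree, a vertex `t` cannot have two distinct neighbors both at distance
(from a fixed vertex `u`) at most `dist u t`. -/
lemma aux_key {V : Type*} {G : SimpleGraph V} (hT : G.IsTree) {u t x₁ x₂ : V}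
    (hne : x₁ ≠ x₂) (h1 : G.Adj x₁ t) (h2 : G.Adj x₂ t)
    (d1 : G.dist u x₁ ≤ G.dist u t) (d2 : G.dist u x₂ ≤ G.dist u t) : False := by
  classical
  have hconn := hT.isConnected
  obtain ⟨P₁, hP₁, hl₁⟩ := hconn.exists_path_of_dist u x₁
  obtain ⟨P₂, hP₂, hl₂⟩ := hconn.exists_path_of_dist u x₂
  have hmem : ∀ (x : V) (hx : G.Adj x t) (P : G.Walk u x), P.length = G.dist u x →
      G.dist u x ≤ G.dist u t → t ∉ P.support := by
    intro x hx P hl hd ht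
    have h3 := Walk.length_takeUntil_le P ht
    have h4 : G.dist u t ≤ (P.takeUntil t ht).length := G.dist_le _
    have h5 : (P.takeUntil t ht).length = P.length := by omega
    have h6 := Walk.take_spec P ht
    have h7 : (P.takeUntil t ht).length + (P.dropUntil t ht).length = P.length := by
      rw [← Walk.length_append, h6]
    have h8 : (P.dropUntil t ht).length = 0 := by omega
    exact hx.ne' (Walk.eq_of_length_eq_zero h8)
  have ht1 := hmem x₁ h1 P₁ hl₁ d1
  have ht2 := hmem x₂ h2 P₂ hl₂ d2
  have hQ1 : (P₁.concat h1).IsPath := aux_concat_isPath hP₁ h1 ht1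
  have hQ2 : (P₂.concat h2).IsPath := aux_concat_isPath hP₂ h2 ht2
  have heq : P₁.concat h1 = P₂.concat h2 :=
    ((hT.existsUnique_path u t).unique hQ1 hQ2)
  have := congrArg (fun q : G.Walk u t => q.reverse.getVert 1) heq
  simp only [Walk.reverse_concat] at this
  rw [show (1 : ℕ) = 0 + 1 from rfl, Walk.getVert_cons_succ, Walk.getVert_cons_succ,
    Walk.getVert_zero, Walk.getVert_zero] at this
  exact hne this

/-- A nearest neighbor operator on a locally finite tree all of whose vertex degrees
are at least `2` admits no nonzero finitely supported eigenfunction. -/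
theorem stmt_6 {V : Type*} (G : SimpleGraph V) [∀ v, Fintype (G.neighborSet v)]
    (hT : G.IsTree) (hdeg : ∀ v, 2 ≤ G.degree v)
    (a : V → V → ℂ)
    (ha1 : ∀ v w, G.Adj v w → a v w ≠ 0)
    (ha2 : ∀ v w, v ≠ w → ¬ G.Adj v w → a v w = 0)
    (lam : ℂ) (φ : V → ℂ) (hφ : (Function.support φ).Finite)
    (heig : ∀ v, a v v * φ v + ∑ w ∈ G.neighborFinset v, a v w * φ w = lam * φ v) :
    φ = 0 := by
  classical
  by_contra hne0
  have hconn := hT.isConnected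
  -- the support as a finset
  set S : Finset V := hφ.toFinset with hS
  have hSmem : ∀ x, x ∈ S ↔ φ x ≠ 0 := by
    intro x; simp [hS, Set.Finite.mem_toFinset, Function.mem_support]
  have hSne : S.Nonempty := by
    rcases Function.ne_iff.mp hne0 with ⟨x, hx⟩
    exact ⟨x, (hSmem x).mpr (by simpa using hx)⟩
  obtain ⟨u, hu⟩ := hSne
  -- v maximizes distance from u over S
  obtain ⟨v, hvS, hvmax⟩ := S.exists_max_image (fun x => G.dist u x) ⟨u, hu⟩
  set D := G.dist u v with hD
  -- find a neighbor w of v with dist u w = D + 1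
  have hw : ∃ w, G.Adj v w ∧ G.dist u w = D + 1 := by
    by_cases huv : u = v
    · -- D = 0; take any neighbor
      have hcard : 0 < (G.neighborFinset v).card := by
        have := hdeg v; rw [← G.card_neighborFinset_eq_degree] at this; omega
      obtain ⟨w, hwmem⟩ := Finset.card_pos.mp hcard
      rw [mem_neighborFinset] at hwmem
      refine ⟨w, hwmem, ?_⟩
      have hD0 : D = 0 := by rw [hD, ← huv]; exact SimpleGraph.dist_self
      rw [hD0]
      have : G.Adj u w := huv ▸ hwmem
      simpa using SimpleGraph.dist_eq_one_iff_adj.mpr this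
    · -- get shortest path and its penultimate vertex p
      obtain ⟨P, hP, hlP⟩ := hconn.exists_path_of_dist u v
      have hPnil : ¬ P.Nil := by
        rw [Walk.not_nil_iff_lt_length, hlP]
        exact hconn.pos_dist_of_ne huv
      have hRnil : ¬ P.reverse.Nil := by
        rw [Walk.not_nil_iff_lt_length, Walk.length_reverse, hlP]
        exact hconn.pos_dist_of_ne huv
      obtain ⟨p, hadj, Q, hQ⟩ := Walk.not_nil_iff.mp hRnil
      -- hadj : G.Adj v p, Q : G.Walk p u
      have hdp : G.dist u p ≤ D - 1 := by
        have h1 : G.dist u p ≤ Q.reverse.length := G.dist_le _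
        have h2 : Q.length + 1 = D := by
          have := congrArg Walk.length hQ
          rw [Walk.length_reverse, hlP] at this
          simpa using this.symm
        rw [Walk.length_reverse] at h1
        omega
      have hDpos : 0 < D := hconn.pos_dist_of_ne huv
      -- choose a neighbor w ≠ p
      have hcard : 1 < (G.neighborFinset v).card := by
        have := hdeg v; rw [← G.card_neighborFinset_eq_degree] at this; omega
      obtain ⟨w, hwmem, hwp⟩ := Finset.exists_mem_ne hcard p
      rw [mem_neighborFinset] at hwmem
      refine ⟨w, hwmem, ?_⟩
      have hle : G.dist u w ≤ D + 1 := by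
        have := hconn.dist_triangle (u := u) (v := v) (w := w)
        rw [SimpleGraph.dist_eq_one_iff_adj.mpr hwmem] at this
        omega
      have hgt : ¬ G.dist u w ≤ D := by
        intro hcon
        exact aux_key hT hwp.symm hadj.symm hwmem.symm (by omega) hcon
      omega
  obtain ⟨w, hvw, hdw⟩ := hw
  -- w is outside the support
  have hwS : φ w = 0 := by
    by_contra hcon
    have := hvmax w ((hSmem w).mpr hcon)
    omega
  -- every neighbor of w in the support equals v
  have huniq : ∀ x, G.Adj w x → φ x ≠ 0 → x = v := by
    intro x hx hφx
    by_contra hxv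
    have hxS := hvmax x ((hSmem x).mpr hφx)
    exact aux_key (u := u) hT hxv (hx.symm) hvw (by omega) (by omega)
  -- evaluate the eigenvalue equation at w
  have heq := heig w
  rw [hwS, mul_zero, mul_zero, zero_add] at heq
  have hsum : ∑ x ∈ G.neighborFinset w, a w x * φ x = a w v * φ v := by
    apply Finset.sum_eq_single_of_mem
    · rw [mem_neighborFinset]; exact hvw.symm
    · intro x hmem hxv
      by_cases hφx : φ x = 0
      · rw [hφx, mul_zero]
      · exact absurd (huniq x ((G.mem_neighborFinset w x).mp hmem) hφx) hxv
  rw [hsum] at heq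
  exact mul_ne_zero (ha1 w v hvw.symm) ((hSmem v).mp hvS) heq
end

section
/- Let T be a locally finite tree such that the vertex degrees tend to infinity, i.e., for every m ∈ ℕ there is a finite set K_m of vertices with deg(v) ≥ m for all v ∉ K_m. Then for every ε > 0 there is a finite set K of vertices such that every finite nonempty vertex set W ⊆ V \ K satisfies |∂_E W| ≥ (1 − ε)·vol(W) and |∂_E W| ≥ (1/ε)·|W|. In other words, the Cheeger constant at infinity satisfies α_{∂V} = 1 and β_{∂V} = ∞. -/
/-- The edge boundary of a vertex set `W`: the set of edges of `G` with exactly one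
endpoint in `W`. -/
def edgeBoundary {V : Type*} (G : SimpleGraph V) (W : Set V) : Set (Sym2 V) :=
  {e | e ∈ G.edgeSet ∧ ∃ v w : V, e = s(v, w) ∧ v ∈ W ∧ w ∉ W}

open SimpleGraph

/-- A path from `w` to `r` whose length is at most the distance. -/
lemma exists_short_path {V : Type*} {G : SimpleGraph V} (hconn : G.Connected) (w r : V) :
    ∃ q : G.Walk w r, q.IsPath ∧ q.length ≤ G.dist w r := by
  classical
  obtain ⟨p, hp⟩ := hconn.exists_walk_length_eq_dist w r
  exact ⟨p.bypass, p.bypass_isPath, hp ▸ p.length_bypass_le⟩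

/-- If `x` lies on a walk `q` from `w` to `r` and `x ≠ w`, then
`dist x r + 1 ≤ q.length`. -/
lemma dist_lt_of_mem_support {V : Type*} {G : SimpleGraph V} {w r x : V}
    (q : G.Walk w r) (hx : x ∈ q.support) (hxw : x ≠ w) :
    G.dist x r + 1 ≤ q.length := by
  classical
  have hspec := q.take_spec hx
  have hlen : (q.takeUntil x hx).length + (q.dropUntil x hx).length = q.length := by
    have := congrArg SimpleGraph.Walk.length hspec
    rwa [SimpleGraph.Walk.length_append] at this
  have h1 : 1 ≤ (q.takeUntil x hx).length := by
    by_contra h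
    push_neg at h
    interval_cases h' : (q.takeUntil x hx).length
    exact hxw (SimpleGraph.Walk.eq_of_length_eq_zero h').symm
  have h2 : G.dist x r ≤ (q.dropUntil x hx).length := SimpleGraph.dist_le _
  omega

/-- In a tree, a vertex has at most one neighbor strictly closer to the root. -/
lemma parent_unique {V : Type*} {G : SimpleGraph V} (hconn : G.Connected)
    (hacyc : G.IsAcyclic) {r v u₁ u₂ : V}
    (h1 : G.Adj v u₁) (h2 : G.Adj v u₂)
    (hd1 : G.dist u₁ r < G.dist v r) (hd2 : G.dist u₂ r < G.dist v r) :
    u₁ = u₂ := by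
  obtain ⟨q₁, hq₁, hl₁⟩ := exists_short_path hconn u₁ r
  obtain ⟨q₂, hq₂, hl₂⟩ := exists_short_path hconn u₂ r
  have hv1 : v ∉ q₁.support := by
    intro hv
    have hne : v ≠ u₁ := h1.ne
    have := dist_lt_of_mem_support q₁ hv hne
    omega
  have hv2 : v ∉ q₂.support := by
    intro hv
    have hne : v ≠ u₂ := h2.ne
    have := dist_lt_of_mem_support q₂ hv hne
    omega
  have hp1 : (SimpleGraph.Walk.cons h1 q₁).IsPath := hq₁.cons hv1
  have hp2 : (SimpleGraph.Walk.cons h2 q₂).IsPath := hq₂.cons hv2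
  have := hacyc.path_unique ⟨SimpleGraph.Walk.cons h1 q₁, hp1⟩
    ⟨SimpleGraph.Walk.cons h2 q₂, hp2⟩
  have heq : (SimpleGraph.Walk.cons h1 q₁) = (SimpleGraph.Walk.cons h2 q₂) :=
    congrArg Subtype.val this
  have := congrArg (fun w => SimpleGraph.Walk.getVert w 1) heq
  simpa using this

/-- In a tree, adjacent vertices have different distances to the root. -/
lemma no_tie {V : Type*} {G : SimpleGraph V} (hconn : G.Connected)
    (hacyc : G.IsAcyclic) {r v w : V} (hvw : G.Adj v w) :
    G.dist v r ≠ G.dist w r := by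
  intro heq
  obtain ⟨q, hq, hlq⟩ := exists_short_path hconn w r
  have hv : v ∉ q.support := by
    intro hv
    have := dist_lt_of_mem_support q hv hvw.ne
    omega
  have hp : (SimpleGraph.Walk.cons hvw q).IsPath := hq.cons hv
  obtain ⟨p, hpp, hlp⟩ := exists_short_path hconn v r
  have := hacyc.path_unique ⟨p, hpp⟩ ⟨SimpleGraph.Walk.cons hvw q, hp⟩
  have hwalk : p = SimpleGraph.Walk.cons hvw q := congrArg Subtype.val this
  have hlen : p.length = q.length + 1 := by rw [hwalk]; simp
  have hd : G.dist w r ≤ q.length := SimpleGraph.dist_le _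
  omega

/-- In a locally finite tree whose vertex degrees tend to infinity, for every `ε > 0`
there is a finite vertex set `K` such that every finite nonempty vertex set `W`
avoiding `K` satisfies `|∂_E W| ≥ (1 − ε)·vol(W)` and `|∂_E W| ≥ (1/ε)·|W|`;
i.e. the Cheeger constants at infinity satisfy `α_{∂V} = 1` and `β_{∂V} = ∞`. -/
theorem stmt_9 {V : Type*} (G : SimpleGraph V) [∀ v, Fintype (G.neighborSet v)]
    (hT : G.IsTree)
    (hdeg : ∀ m : ℕ, ∃ K : Finset V, ∀ v ∉ K, m ≤ G.degree v) :
    ∀ ε : ℝ, 0 < ε → ∃ K : Finset V, ∀ W : Finset V, W.Nonempty → (∀ v ∈ W, v ∉ K) →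
      (1 - ε) * (∑ v ∈ W, (G.degree v : ℝ)) ≤ ((edgeBoundary G ↑W).ncard : ℝ) ∧
      (1 / ε) * W.card ≤ ((edgeBoundary G ↑W).ncard : ℝ) := by
  classical
  have hconn := hT.isConnected
  have hacyc := hT.IsAcyclic
  have : Nonempty V := hconn.nonempty
  obtain ⟨r⟩ := this
  intro ε hε
  set M : ℕ := ⌈2 / ε⌉₊ + ⌈1 / ε⌉₊ + 2 with hM
  obtain ⟨K, hK⟩ := hdeg M
  refine ⟨K, fun W hWne hWK => ?_⟩
  -- the set of "darts" out of W
  set S : Finset (Σ _ : V, V) := W.sigma (fun v => G.neighborFinset v) with hS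
  have hScard : S.card = ∑ v ∈ W, G.degree v := by
    rw [hS, Finset.card_sigma]
    exact Finset.sum_congr rfl fun v _ => G.card_neighborFinset_eq_degree v
  set Pin : Finset (Σ _ : V, V) := S.filter (fun p => p.2 ∈ W) with hPin
  set Pout : Finset (Σ _ : V, V) := S.filter (fun p => p.2 ∉ W) with hPout
  have hsplit : Pin.card + Pout.card = S.card :=
    Finset.card_filter_add_card_filter_not (s := S) (fun p => p.2 ∈ W)
  have hmemS : ∀ p : (Σ _ : V, V), p ∈ S ↔ p.1 ∈ W ∧ G.Adj p.1 p.2 := by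
    intro p
    rw [hS]
    cases p with
    | mk a b => simp [Finset.mem_sigma, SimpleGraph.mem_neighborFinset]
  -- the edge boundary is the image of Pout
  have hbd : edgeBoundary G ↑W = ↑(Pout.image (fun p => s(p.1, p.2))) := by
    ext e
    simp only [edgeBoundary, Set.mem_setOf_eq, Finset.coe_image, Set.mem_image,
      Finset.mem_coe]
    constructor
    · rintro ⟨he, v, w, rfl, hv, hw⟩
      refine ⟨⟨v, w⟩, ?_, rfl⟩
      rw [hPout, Finset.mem_filter, hmemS]
      exact ⟨⟨hv, (SimpleGraph.mem_edgeSet G).mp he⟩, hw⟩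
    · rintro ⟨p, hp, rfl⟩
      rw [hPout, Finset.mem_filter, hmemS] at hp
      exact ⟨(SimpleGraph.mem_edgeSet G).mpr hp.1.2, p.1, p.2, rfl, hp.1.1, hp.2⟩
  have hinj : Set.InjOn (fun p : (Σ _ : V, V) => s(p.1, p.2)) ↑Pout := by
    intro p hp q hq hpq
    simp only [Finset.mem_coe, hPout, Finset.mem_filter, hmemS] at hp hq
    simp only [Sym2.eq_iff] at hpq
    rcases hpq with ⟨h1, h2⟩ | ⟨h1, h2⟩
    · cases p; cases q; simp_all
    · exact absurd (h1 ▸ hp.1.1) hq.2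
  have hncard : (edgeBoundary G ↑W).ncard = Pout.card := by
    rw [hbd, Set.ncard_coe_finset, Finset.card_image_of_injOn hinj]
  -- bound Pin.card ≤ 2 * W.card
  have hPinbound : Pin.card ≤ 2 * W.card := by
    set A : Finset (Σ _ : V, V) := Pin.filter (fun p => G.dist p.2 r < G.dist p.1 r) with hA
    set B : Finset (Σ _ : V, V) := Pin.filter (fun p => ¬ G.dist p.2 r < G.dist p.1 r) with hB
    have hPinsub : Pin.card = A.card + B.card :=
      (Finset.card_filter_add_card_filter_not (s := Pin)
        (fun p => G.dist p.2 r < G.dist p.1 r)).symm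
    have hAle : A.card ≤ W.card := by
      apply Finset.card_le_card_of_injOn (fun p => p.1)
      · intro p hp
        rw [Finset.mem_coe, hA, Finset.mem_filter, hPin, Finset.mem_filter, hmemS] at hp
        exact hp.1.1.1
      · rintro ⟨pa, pb⟩ hp ⟨qa, qb⟩ hq hpq
        dsimp only at hpq
        subst hpq
        simp only [Finset.mem_coe, hA, Finset.mem_filter, hPin, hmemS] at hp hq
        obtain ⟨⟨⟨hp1, hp2⟩, _⟩, hp3⟩ := hp
        obtain ⟨⟨⟨hq1, hq2⟩, _⟩, hq3⟩ := hq
        have : pb = qb := parent_unique hconn hacyc hp2 hq2 hp3 hq3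
        simp_all
    have hBle : B.card ≤ W.card := by
      apply Finset.card_le_card_of_injOn (fun p => p.2)
      · intro p hp
        rw [Finset.mem_coe, hB, Finset.mem_filter, hPin, Finset.mem_filter] at hp
        exact hp.1.2
      · rintro ⟨pa, pb⟩ hp ⟨qa, qb⟩ hq hpq
        dsimp only at hpq
        subst hpq
        simp only [Finset.mem_coe, hB, Finset.mem_filter, hPin, hmemS] at hp hq
        obtain ⟨⟨⟨hp1, hp2⟩, _⟩, hp3⟩ := hp
        obtain ⟨⟨⟨hq1, hq2⟩, _⟩, hq3⟩ := hq
        have hp3' : G.dist pa r < G.dist pb r :=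
          lt_of_le_of_ne (not_lt.mp hp3) (no_tie hconn hacyc hp2)
        have hq3' : G.dist qa r < G.dist pb r :=
          lt_of_le_of_ne (not_lt.mp hq3) (no_tie hconn hacyc hq2)
        have : pa = qa := parent_unique hconn hacyc hp2.symm hq2.symm hp3' hq3'
        simp_all
    omega
  -- arithmetic
  have hdegW : ∀ v ∈ W, M ≤ G.degree v := fun v hv => hK v (hWK v hv)
  have hDsum : (W.card * M : ℕ) ≤ ∑ v ∈ W, G.degree v := by
    calc (W.card * M : ℕ) = W.card • M := by rw [smul_eq_mul]
    _ ≤ ∑ v ∈ W, G.degree v := Finset.card_nsmul_le_sum W _ M hdegW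
  have hPoutcard : (Pout.card : ℝ) = (∑ v ∈ W, (G.degree v : ℝ)) - Pin.card := by
    have : (Pin.card : ℝ) + Pout.card = ∑ v ∈ W, (G.degree v : ℝ) := by
      rw [← Nat.cast_add, hsplit, hScard, Nat.cast_sum]
    linarith
  have hD : (W.card : ℝ) * M ≤ ∑ v ∈ W, (G.degree v : ℝ) := by
    calc (W.card : ℝ) * M = ((W.card * M : ℕ) : ℝ) := by push_cast; ring
    _ ≤ ((∑ v ∈ W, G.degree v : ℕ) : ℝ) := Nat.cast_le.mpr hDsum
    _ = ∑ v ∈ W, (G.degree v : ℝ) := Nat.cast_sum _ _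
  have hPinR : (Pin.card : ℝ) ≤ 2 * W.card := by
    calc (Pin.card : ℝ) ≤ ((2 * W.card : ℕ) : ℝ) := Nat.cast_le.mpr hPinbound
    _ = 2 * W.card := by push_cast; ring
  have hlow : (∑ v ∈ W, (G.degree v : ℝ)) - 2 * W.card ≤ ((edgeBoundary G ↑W).ncard : ℝ) := by
    rw [hncard, hPoutcard]
    linarith
  have hM2 : (2 : ℝ) / ε ≤ M := by
    calc (2 : ℝ) / ε ≤ ⌈2 / ε⌉₊ := Nat.le_ceil _
    _ ≤ M := by rw [hM]; push_cast; linarith [Nat.cast_nonneg (α := ℝ) ⌈1/ε⌉₊]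
  have hM1 : (1 : ℝ) / ε + 2 ≤ M := by
    have h1 : (1 : ℝ) / ε ≤ ⌈1 / ε⌉₊ := Nat.le_ceil _
    rw [hM]; push_cast; linarith [Nat.cast_nonneg (α := ℝ) ⌈2/ε⌉₊]
  have hWc : (0 : ℝ) ≤ W.card := Nat.cast_nonneg _
  constructor
  · -- (1 - ε) * vol ≤ boundary
    have h2n : 2 * (W.card : ℝ) ≤ ε * (∑ v ∈ W, (G.degree v : ℝ)) := by
      have hεM : 2 ≤ ε * M := by
        have := mul_le_mul_of_nonneg_left hM2 hε.le
        rwa [mul_div_cancel₀ _ hε.ne'] at this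
      calc 2 * (W.card : ℝ) ≤ (ε * M) * W.card := by nlinarith
      _ = ε * ((W.card : ℝ) * M) := by ring
      _ ≤ ε * (∑ v ∈ W, (G.degree v : ℝ)) := by
          apply mul_le_mul_of_nonneg_left hD hε.le
    linarith
  · -- (1/ε) * |W| ≤ boundary
    have : (1 / ε) * W.card ≤ (∑ v ∈ W, (G.degree v : ℝ)) - 2 * W.card := by
      have : ((M : ℝ) - 2) * W.card ≤ (∑ v ∈ W, (G.degree v : ℝ)) - 2 * W.card := by
        nlinarith
      calc (1 / ε) * (W.card : ℝ) ≤ ((M : ℝ) - 2) * W.card := by nlinarith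
      _ ≤ _ := this
    linarith
end
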